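/- arXiv:2511.01538 — 2 statements merged into one kernel-verified Lean document; each statement's English description precedes it below -/
import Mathlib

section
/- Assume 0 ∈ Dom G. Let L ∈ 𝒜 with associated stabilizing solution P̃_L, and let P, Z be real symmetric n×n matrices such that P ∈ Dom G, P + Z ∈ Dom G, and Z satisfies the inner Riccati equation at P. If P̃_L ⪰ P + Z, then the tuple (A + B_1 K_1(P+Z) + B_2 K_2(0) + B_2 L, C_1 + D_{1,1} K_1(P+Z) + D_{1,2} K_2(0) + D_{1,2} L, …, C_r + D_{r,1} K_1(P+Z) + D_{r,2} K_2(0) + D_{r,2} L) is mean-square stable. -/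
set_option linter.unusedSectionVars false
set_option maxHeartbeats 1000000


open Matrix BigOperators

noncomputable section

/-- Mean-square stability of the tuple `(F, G_1, …, G_r)` via the Lyapunov characterization. -/
def MSStable {n r : ℕ} (F : Matrix (Fin n) (Fin n) ℝ)
    (G : Fin r → Matrix (Fin n) (Fin n) ℝ) : Prop :=
  ∃ X : Matrix (Fin n) (Fin n) ℝ, X.PosDef ∧
    (-(X * F + Fᵀ * X + ∑ l, (G l)ᵀ * X * G l)).PosDef

/-- Stochastic detectability of the system `[E_0, …, E_r; F, G_1, …, G_r]`. -/
def StochDetectable {n q r : ℕ} (E0 : Matrix (Fin q) (Fin n) ℝ)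
    (E : Fin r → Matrix (Fin q) (Fin n) ℝ)
    (F : Matrix (Fin n) (Fin n) ℝ) (G : Fin r → Matrix (Fin n) (Fin n) ℝ) : Prop :=
  ∃ Θ : Matrix (Fin n) (Fin q) ℝ, MSStable (F + Θ * E0) (fun l => G l + Θ * E l)


section QF
variable {a b : Type*} [Fintype a] [Fintype b] [DecidableEq a]

lemma qf_mul (U : Matrix a b ℝ) (V : Matrix b a ℝ) (x : a → ℝ) :
    x ⬝ᵥ (U * V) *ᵥ x = (Uᵀ *ᵥ x) ⬝ᵥ (V *ᵥ x) := by
  rw [← Matrix.mulVec_mulVec, Matrix.dotProduct_mulVec, ← Matrix.mulVec_transpose]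

lemma qf_sum {ι : Type*} (s : Finset ι) (M : ι → Matrix a a ℝ) (x : a → ℝ) :
    x ⬝ᵥ (∑ l ∈ s, M l) *ᵥ x = ∑ l ∈ s, x ⬝ᵥ M l *ᵥ x := by
  classical
  induction s using Finset.induction with
  | empty => simp
  | insert _ _ h ih =>
      rw [Finset.sum_insert h, Finset.sum_insert h, Matrix.add_mulVec,
        dotProduct_add, ih]

lemma qf_transpose (M : Matrix a a ℝ) (x : a → ℝ) :
    x ⬝ᵥ Mᵀ *ᵥ x = x ⬝ᵥ M *ᵥ x := by
  rw [Matrix.mulVec_transpose, dotProduct_comm, Matrix.dotProduct_mulVec]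

lemma sq_le_dot (x : a → ℝ) (i : a) : x i * x i ≤ x ⬝ᵥ x := by
  unfold dotProduct
  exact Finset.single_le_sum (fun j _ => mul_self_nonneg (x j)) (Finset.mem_univ i)

lemma qf_upper (M : Matrix a a ℝ) : ∃ K : ℝ, 0 ≤ K ∧ ∀ x : a → ℝ,
    x ⬝ᵥ M *ᵥ x ≤ K * (x ⬝ᵥ x) := by
  refine ⟨∑ i, ∑ j, |M i j|, by positivity, fun x => ?_⟩
  have h1 : x ⬝ᵥ M *ᵥ x = ∑ i, ∑ j, x i * M i j * x j := by
    simp [dotProduct, Matrix.mulVec, Finset.mul_sum, mul_assoc]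
  rw [h1, Finset.sum_mul]
  refine Finset.sum_le_sum fun i _ => ?_
  rw [Finset.sum_mul]
  refine Finset.sum_le_sum fun j _ => ?_
  have h2 : x i * M i j * x j ≤ |x i * M i j * x j| := le_abs_self _
  have h3 : |x i * M i j * x j| = |M i j| * |x i * x j| := by
    rw [abs_mul, abs_mul, mul_comm |x i| _, mul_assoc, ← abs_mul]
  have h4 : |x i * x j| ≤ x ⬝ᵥ x := by
    rcases le_total (|x i|) (|x j|) with h | h
    · calc |x i * x j| = |x i| * |x j| := abs_mul _ _
        _ ≤ |x j| * |x j| := by nlinarith [abs_nonneg (x i)]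
        _ = x j * x j := abs_mul_abs_self _
        _ ≤ x ⬝ᵥ x := sq_le_dot x j
    · calc |x i * x j| = |x i| * |x j| := abs_mul _ _
        _ ≤ |x i| * |x i| := by nlinarith [abs_nonneg (x j)]
        _ = x i * x i := abs_mul_abs_self _
        _ ≤ x ⬝ᵥ x := sq_le_dot x i
  calc x i * M i j * x j ≤ |M i j| * |x i * x j| := h2.trans h3.le
    _ ≤ |M i j| * (x ⬝ᵥ x) := by
        exact mul_le_mul_of_nonneg_left h4 (abs_nonneg _)

lemma posdef_lower {N : Matrix a a ℝ} (hN : N.PosDef) :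
    ∃ μ : ℝ, 0 < μ ∧ ∀ u : a → ℝ, u ⬝ᵥ u ≤ μ * (u ⬝ᵥ N *ᵥ u) := by
  obtain ⟨K, hK0, hK⟩ := qf_upper N⁻¹
  have hdet : IsUnit N.det := isUnit_iff_ne_zero.mpr hN.det_pos.ne'
  have hNsymm : Nᵀ = N := by
    have := hN.isHermitian
    rwa [Matrix.IsHermitian, Matrix.conjTranspose_eq_transpose_of_trivial] at this
  refine ⟨K + 1, by linarith, fun u => ?_⟩
  have hpsd : ∀ w : a → ℝ, 0 ≤ w ⬝ᵥ N *ᵥ w := fun w => by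
    simpa using hN.posSemidef.dotProduct_mulVec_nonneg w
  set v : a → ℝ := N⁻¹ *ᵥ u with hv
  have hNv : N *ᵥ v = u := by
    rw [hv, Matrix.mulVec_mulVec, Matrix.mul_nonsing_inv _ hdet, Matrix.one_mulVec]
  -- Cauchy-Schwarz via discriminant
  have hsym : ∀ w z : a → ℝ, w ⬝ᵥ N *ᵥ z = z ⬝ᵥ N *ᵥ w := fun w z => by
    rw [Matrix.dotProduct_mulVec, ← Matrix.mulVec_transpose, hNsymm, dotProduct_comm]
  have hCS : (u ⬝ᵥ N *ᵥ v) ^ 2 ≤ (u ⬝ᵥ N *ᵥ u) * (v ⬝ᵥ N *ᵥ v) := by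
    have hq : ∀ t : ℝ, 0 ≤ (v ⬝ᵥ N *ᵥ v) * (t * t) + (2 * (u ⬝ᵥ N *ᵥ v)) * t
        + (u ⬝ᵥ N *ᵥ u) := by
      intro t
      have := hpsd (u + t • v)
      have hexp : (u + t • v) ⬝ᵥ N *ᵥ (u + t • v)
          = (v ⬝ᵥ N *ᵥ v) * (t * t) + (2 * (u ⬝ᵥ N *ᵥ v)) * t + (u ⬝ᵥ N *ᵥ u) := by
        rw [Matrix.mulVec_add, Matrix.mulVec_smul]
        rw [add_dotProduct, smul_dotProduct]
        rw [dotProduct_add, dotProduct_add]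
        rw [dotProduct_smul, dotProduct_smul]
        rw [hsym v u]
        ring_nf
      linarith [hexp ▸ this]
    have hd := discrim_le_zero hq
    rw [discrim] at hd
    nlinarith [hd]
  have huu : u ⬝ᵥ N *ᵥ v = u ⬝ᵥ u := by rw [hNv]
  have hvv : v ⬝ᵥ N *ᵥ v ≤ K * (u ⬝ᵥ u) := by
    rw [hNv, dotProduct_comm]
    exact hK u
  have hqu : 0 ≤ u ⬝ᵥ N *ᵥ u := hpsd u
  rcases eq_or_lt_of_le (Finset.sum_nonneg fun i _ => mul_self_nonneg (u i) :
      (0:ℝ) ≤ u ⬝ᵥ u) with h0 | h0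
  · have h0' : u ⬝ᵥ u = 0 := h0.symm
    rw [h0']; positivity
  · have h0'' : (0:ℝ) < u ⬝ᵥ u := h0
    nlinarith [hCS, hqu, h0'', mul_le_mul_of_nonneg_left hvv hqu]

lemma two_dot {m' : Type*} [Fintype m'] (a u : m' → ℝ) {ε : ℝ} (hε : 0 < ε) :
    (a ⬝ᵥ u) + (a ⬝ᵥ u) ≤ ε * (u ⬝ᵥ u) + ε⁻¹ * (a ⬝ᵥ a) := by
  have h0 : (0:ℝ) ≤ (ε • u - a) ⬝ᵥ (ε • u - a) :=
    Finset.sum_nonneg fun i _ => mul_self_nonneg _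
  have hexp : (ε • u - a) ⬝ᵥ (ε • u - a)
      = ε * ε * (u ⬝ᵥ u) - ε * (a ⬝ᵥ u) - ε * (a ⬝ᵥ u) + a ⬝ᵥ a := by
    simp [sub_dotProduct, dotProduct_sub, smul_dotProduct,
      dotProduct_smul, smul_eq_mul, dotProduct_comm u a]
    ring
  have hinv : ε * ε⁻¹ = 1 := mul_inv_cancel₀ hε.ne'
  have haa : (0:ℝ) ≤ a ⬝ᵥ a := Finset.sum_nonneg fun i _ => mul_self_nonneg _
  rw [hexp] at h0
  have h2 : ε * (a ⬝ᵥ u) + ε * (a ⬝ᵥ u) ≤ ε * ε * (u ⬝ᵥ u) + a ⬝ᵥ a := by linarith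
  have h3 := mul_le_mul_of_nonneg_left h2 (le_of_lt (inv_pos.mpr hε))
  calc (a ⬝ᵥ u) + (a ⬝ᵥ u) = ε⁻¹ * (ε * (a ⬝ᵥ u) + ε * (a ⬝ᵥ u)) := by
        field_simp
    _ ≤ ε⁻¹ * (ε * ε * (u ⬝ᵥ u) + a ⬝ᵥ a) := h3
    _ = ε * (u ⬝ᵥ u) + ε⁻¹ * (a ⬝ᵥ a) := by field_simp

lemma dot_self_pos {m' : Type*} [Fintype m'] [DecidableEq m'] {x : m' → ℝ} (hx : x ≠ 0) :
    0 < x ⬝ᵥ x := by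
  rcases Function.ne_iff.mp hx with ⟨i, hi⟩
  have h1 : 0 < x i * x i := mul_self_pos.mpr hi
  have h2 : x i * x i ≤ x ⬝ᵥ x := sq_le_dot x i
  linarith

lemma real_herm_iff (M : Matrix a a ℝ) : M.IsHermitian ↔ Mᵀ = M := by
  rw [Matrix.IsHermitian, Matrix.conjTranspose_eq_transpose_of_trivial]

lemma msstable_perturb {n m r : ℕ}
    (Fh : Matrix (Fin n) (Fin n) ℝ) (Gh : Fin r → Matrix (Fin n) (Fin n) ℝ)
    (B : Matrix (Fin n) (Fin m) ℝ) (D : Fin r → Matrix (Fin n) (Fin m) ℝ)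
    (W1 : Matrix (Fin m) (Fin n) ℝ) (N : Matrix (Fin m) (Fin m) ℝ) (hN : N.PosDef)
    (Δ S : Matrix (Fin n) (Fin n) ℝ) (hΔ : Δ.PosSemidef) (hS : S.PosSemidef)
    (hstab : MSStable Fh Gh)
    (heq : Δ * (Fh + B * W1) + (Fh + B * W1)ᵀ * Δ
        + ∑ l, (Gh l + D l * W1)ᵀ * Δ * (Gh l + D l * W1)
        = -(W1ᵀ * N * W1) - S) :
    MSStable (Fh + B * W1) (fun l => Gh l + D l * W1) := by
  classical
  obtain ⟨Y, hY, hYneg⟩ := hstab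
  have hYsymm : Yᵀ = Y := (real_herm_iff Y).mp hY.isHermitian
  have hNsymm : Nᵀ = N := (real_herm_iff N).mp hN.isHermitian
  have hΔsymm : Δᵀ = Δ := (real_herm_iff Δ).mp hΔ.isHermitian
  set F : Matrix (Fin n) (Fin n) ℝ := Fh + B * W1 with hF
  set G : Fin r → Matrix (Fin n) (Fin n) ℝ := fun l => Gh l + D l * W1 with hG
  set MYh : Matrix (Fin n) (Fin n) ℝ := Y * Fh + Fhᵀ * Y + ∑ l, (Gh l)ᵀ * Y * Gh l with hMYh
  set T : Fin r → Matrix (Fin m) (Fin m) ℝ := fun l => (D l)ᵀ * (Y * D l) with hT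
  -- constants
  obtain ⟨μY, hμY, hμYle⟩ := posdef_lower hYneg
  obtain ⟨μN, hμN, hμNle⟩ := posdef_lower hN
  obtain ⟨Ka, hKa0, hKa⟩ := qf_upper ((Bᵀ * Y)ᵀ * (Bᵀ * Y))
  choose Kc hKc0 hKc using fun l => qf_upper (((D l)ᵀ * (Y * Gh l))ᵀ * ((D l)ᵀ * (Y * Gh l)))
  choose Kd hKd0 hKd using fun l => qf_upper (T l)
  have hKCnn : (0:ℝ) ≤ Ka + ∑ l, Kc l := by
    have := Finset.sum_nonneg (fun l (_ : l ∈ Finset.univ) => hKc0 l); linarith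
  obtain ⟨ε, hε, hεge⟩ : ∃ e : ℝ, 0 < e ∧ 2 * μY * (Ka + ∑ l, Kc l) ≤ e :=
    ⟨2 * μY * (Ka + ∑ l, Kc l) + 1, by nlinarith, by linarith⟩
  have hKdnn : (0:ℝ) ≤ ∑ l, Kd l := Finset.sum_nonneg fun l _ => hKd0 l
  obtain ⟨c, hc, hcprop⟩ : ∃ cc : ℝ, 0 < cc ∧ ∀ w : Fin m → ℝ,
      ((1 + (r:ℝ)) * ε + ∑ l, Kd l) * (w ⬝ᵥ w) ≤ cc * (w ⬝ᵥ N *ᵥ w) := by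
    refine ⟨((1 + (r:ℝ)) * ε + ∑ l, Kd l) * μN, ?_, fun w => ?_⟩
    · have h2 : (0:ℝ) ≤ (r:ℝ) := Nat.cast_nonneg r
      have : (0:ℝ) < (1 + (r:ℝ)) * ε + ∑ l, Kd l := by nlinarith
      exact mul_pos this hμN
    · have hnn : (0:ℝ) ≤ (1 + (r:ℝ)) * ε + ∑ l, Kd l := by
        have h2 : (0:ℝ) ≤ (r:ℝ) := Nat.cast_nonneg r
        nlinarith
      calc ((1 + (r:ℝ)) * ε + ∑ l, Kd l) * (w ⬝ᵥ w)
          ≤ ((1 + (r:ℝ)) * ε + ∑ l, Kd l) * (μN * (w ⬝ᵥ N *ᵥ w)) :=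
            mul_le_mul_of_nonneg_left (hμNle w) hnn
        _ = ((1 + (r:ℝ)) * ε + ∑ l, Kd l) * μN * (w ⬝ᵥ N *ᵥ w) := by rw [mul_assoc]
  -- the matrix decomposition
  have hmat : (c • Δ + Y) * F + Fᵀ * (c • Δ + Y) + ∑ l, (G l)ᵀ * (c • Δ + Y) * G l
      = c • (Δ * F + Fᵀ * Δ + ∑ l, (G l)ᵀ * Δ * G l)
        + (Y * F + Fᵀ * Y + ∑ l, (G l)ᵀ * Y * G l) := by
    simp only [Matrix.add_mul, Matrix.mul_add, Matrix.smul_mul, Matrix.mul_smul,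
      Finset.sum_add_distrib, Finset.smul_sum, smul_add]
    abel
  have hMY : Y * F + Fᵀ * Y + ∑ l, (G l)ᵀ * Y * G l
      = MYh + (Y * B) * W1 + W1ᵀ * (Bᵀ * Y)
        + ∑ l, (((D l)ᵀ * (Y * Gh l))ᵀ * W1 + W1ᵀ * ((D l)ᵀ * (Y * Gh l))
            + W1ᵀ * (T l) * W1) := by
    simp only [hF, hG, hMYh, hT, Matrix.transpose_add, Matrix.transpose_mul,
      Matrix.transpose_transpose, Matrix.add_mul, Matrix.mul_add,
      Finset.sum_add_distrib, Matrix.mul_assoc, hYsymm]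
    abel
  have hXsymm : (c • Δ + Y)ᵀ = c • Δ + Y := by
    simp [Matrix.transpose_add, Matrix.transpose_smul, hΔsymm, hYsymm]
  refine ⟨c • Δ + Y, posDef_iff_dotProduct_mulVec.mpr ⟨?_, ?_⟩,
    posDef_iff_dotProduct_mulVec.mpr ⟨?_, ?_⟩⟩
  · rw [real_herm_iff]; exact hXsymm
  · intro x hx
    have h1 : (0:ℝ) ≤ x ⬝ᵥ Δ *ᵥ x := by simpa using hΔ.dotProduct_mulVec_nonneg x
    have h2 : (0:ℝ) < x ⬝ᵥ Y *ᵥ x := by simpa using hY.dotProduct_mulVec_pos hx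
    simp only [star_trivial, Matrix.add_mulVec, Matrix.smul_mulVec,
      dotProduct_add, dotProduct_smul, smul_eq_mul]
    nlinarith
  · rw [real_herm_iff]
    have hterm : ∀ l : Fin r, ((G l)ᵀ * (c • Δ + Y) * G l)ᵀ
        = (G l)ᵀ * (c • Δ + Y) * G l := fun l => by
      rw [Matrix.transpose_mul, Matrix.transpose_mul, Matrix.transpose_transpose,
        hXsymm, Matrix.mul_assoc]
    rw [Matrix.transpose_neg, Matrix.transpose_add, Matrix.transpose_add,
      Matrix.transpose_sum, Matrix.transpose_mul, Matrix.transpose_mul,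
      Matrix.transpose_transpose, hXsymm, Finset.sum_congr rfl (fun l _ => hterm l)]
    abel
  · intro x hx
    set u : Fin m → ℝ := W1 *ᵥ x with hu
    set av : Fin m → ℝ := (Bᵀ * Y) *ᵥ x with hav
    set al : Fin r → (Fin m → ℝ) := fun l => ((D l)ᵀ * (Y * Gh l)) *ᵥ x with hal
    have q1 : x ⬝ᵥ ((Y * B) * W1) *ᵥ x = av ⬝ᵥ u := by
      rw [qf_mul]; rw [show (Y * B)ᵀ = Bᵀ * Y by rw [Matrix.transpose_mul, hYsymm]]
    have q2 : x ⬝ᵥ (W1ᵀ * (Bᵀ * Y)) *ᵥ x = av ⬝ᵥ u := by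
      rw [qf_mul, Matrix.transpose_transpose, dotProduct_comm]
    have q3 : ∀ l, x ⬝ᵥ (((D l)ᵀ * (Y * Gh l))ᵀ * W1) *ᵥ x = al l ⬝ᵥ u := by
      intro l; rw [qf_mul, Matrix.transpose_transpose]
    have q4 : ∀ l, x ⬝ᵥ (W1ᵀ * ((D l)ᵀ * (Y * Gh l))) *ᵥ x = al l ⬝ᵥ u := by
      intro l; rw [qf_mul, Matrix.transpose_transpose, dotProduct_comm]
    have hTsymm : ∀ l, (T l)ᵀ = T l := by
      intro l; simp [hT, Matrix.transpose_mul, Matrix.mul_assoc, hYsymm]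
    have q5 : ∀ l, x ⬝ᵥ (W1ᵀ * (T l) * W1) *ᵥ x = u ⬝ᵥ (T l) *ᵥ u := by
      intro l
      rw [qf_mul, Matrix.transpose_mul, Matrix.transpose_transpose, hTsymm l,
        ← Matrix.mulVec_mulVec, dotProduct_comm]
    have qN : x ⬝ᵥ (W1ᵀ * N * W1) *ᵥ x = u ⬝ᵥ N *ᵥ u := by
      rw [qf_mul, Matrix.transpose_mul, Matrix.transpose_transpose, hNsymm,
        ← Matrix.mulVec_mulVec, dotProduct_comm]
    have hS0 : (0:ℝ) ≤ x ⬝ᵥ S *ᵥ x := by simpa using hS.dotProduct_mulVec_nonneg x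
    have hqN0 : (0:ℝ) ≤ u ⬝ᵥ N *ᵥ u := by simpa using hN.posSemidef.dotProduct_mulVec_nonneg u
    have hxx : (0:ℝ) < x ⬝ᵥ x := dot_self_pos hx
    -- the Δ part
    have heq' : Δ * F + Fᵀ * Δ + ∑ l, (G l)ᵀ * Δ * G l = -(W1ᵀ * N * W1) - S := by
      simp only [hG]; exact heq
    have eΔ : x ⬝ᵥ (Δ * F + Fᵀ * Δ + ∑ l, (G l)ᵀ * Δ * G l) *ᵥ x
        = -(u ⬝ᵥ N *ᵥ u) - x ⬝ᵥ S *ᵥ x := by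
      rw [heq', Matrix.sub_mulVec, dotProduct_sub, Matrix.neg_mulVec,
        dotProduct_neg, qN]
    -- the Y part
    have eY : x ⬝ᵥ (Y * F + Fᵀ * Y + ∑ l, (G l)ᵀ * Y * G l) *ᵥ x
        = x ⬝ᵥ MYh *ᵥ x + (av ⬝ᵥ u + av ⬝ᵥ u)
          + ∑ l, (al l ⬝ᵥ u + al l ⬝ᵥ u + u ⬝ᵥ (T l) *ᵥ u) := by
      rw [hMY]
      simp only [Matrix.add_mulVec, dotProduct_add, qf_sum, q1, q2, q3, q4, q5]
      ring
    -- scalar bounds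
    have b1' : av ⬝ᵥ av ≤ Ka * (x ⬝ᵥ x) := by
      have h := hKa x
      rwa [qf_mul, Matrix.transpose_transpose] at h
    have hb1 : av ⬝ᵥ u + av ⬝ᵥ u ≤ ε * (u ⬝ᵥ u) + ε⁻¹ * (Ka * (x ⬝ᵥ x)) := by
      have h := two_dot av u hε
      have h2 : ε⁻¹ * (av ⬝ᵥ av) ≤ ε⁻¹ * (Ka * (x ⬝ᵥ x)) :=
        mul_le_mul_of_nonneg_left b1' (inv_nonneg.mpr hε.le)
      linarith
    have hb2 : ∀ l, al l ⬝ᵥ u + al l ⬝ᵥ u + u ⬝ᵥ (T l) *ᵥ u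
        ≤ ε * (u ⬝ᵥ u) + ε⁻¹ * (Kc l * (x ⬝ᵥ x)) + Kd l * (u ⬝ᵥ u) := by
      intro l
      have h := two_dot (al l) u hε
      have b2' : al l ⬝ᵥ al l ≤ Kc l * (x ⬝ᵥ x) := by
        have h2 := hKc l x
        rwa [qf_mul, Matrix.transpose_transpose] at h2
      have h2 : ε⁻¹ * (al l ⬝ᵥ al l) ≤ ε⁻¹ * (Kc l * (x ⬝ᵥ x)) :=
        mul_le_mul_of_nonneg_left b2' (inv_nonneg.mpr hε.le)
      have h3 := hKd l u
      linarith
    have hbsum : ∑ l, (al l ⬝ᵥ u + al l ⬝ᵥ u + u ⬝ᵥ (T l) *ᵥ u)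
        ≤ (r:ℝ) * (ε * (u ⬝ᵥ u)) + ε⁻¹ * ((∑ l, Kc l) * (x ⬝ᵥ x))
          + (∑ l, Kd l) * (u ⬝ᵥ u) := by
      calc ∑ l, (al l ⬝ᵥ u + al l ⬝ᵥ u + u ⬝ᵥ (T l) *ᵥ u)
          ≤ ∑ l, (ε * (u ⬝ᵥ u) + ε⁻¹ * (Kc l * (x ⬝ᵥ x)) + Kd l * (u ⬝ᵥ u)) :=
            Finset.sum_le_sum fun l _ => hb2 l
        _ = (r:ℝ) * (ε * (u ⬝ᵥ u)) + ε⁻¹ * ((∑ l, Kc l) * (x ⬝ᵥ x))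
            + (∑ l, Kd l) * (u ⬝ᵥ u) := by
            rw [Finset.sum_add_distrib, Finset.sum_add_distrib]
            congr 1
            · congr 1
              · rw [Finset.sum_const, Finset.card_univ, Fintype.card_fin, nsmul_eq_mul]
              · rw [← Finset.mul_sum, ← Finset.sum_mul]
            · rw [← Finset.sum_mul]
    -- the u-balance
    have hu2 : ((1 + (r:ℝ)) * ε + ∑ l, Kd l) * (u ⬝ᵥ u) ≤ c * (u ⬝ᵥ N *ᵥ u) := hcprop u
    -- the x-balance
    have hstar : x ⬝ᵥ x ≤ μY * (-(x ⬝ᵥ MYh *ᵥ x)) := by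
      have h := hμYle x
      rwa [Matrix.neg_mulVec, dotProduct_neg] at h
    have hKCx : ε⁻¹ * (Ka * (x ⬝ᵥ x)) + ε⁻¹ * ((∑ l, Kc l) * (x ⬝ᵥ x))
        = (ε⁻¹ * (Ka + ∑ l, Kc l)) * (x ⬝ᵥ x) := by ring
    have hεinv : ε⁻¹ * ε = 1 := inv_mul_cancel₀ hε.ne'
    have hA0 : 0 ≤ ε⁻¹ * (Ka + ∑ l, Kc l) := mul_nonneg (inv_nonneg.mpr hε.le) hKCnn
    have hkey1 : 2 * μY * (ε⁻¹ * (Ka + ∑ l, Kc l)) ≤ 1 := by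
      have h : 2 * μY * (Ka + ∑ l, Kc l) ≤ ε := hεge
      calc 2 * μY * (ε⁻¹ * (Ka + ∑ l, Kc l)) = ε⁻¹ * (2 * μY * (Ka + ∑ l, Kc l)) := by ring
        _ ≤ ε⁻¹ * ε := mul_le_mul_of_nonneg_left h (inv_nonneg.mpr hε.le)
        _ = 1 := hεinv
    have hqmA : x ⬝ᵥ MYh *ᵥ x + (ε⁻¹ * (Ka + ∑ l, Kc l)) * (x ⬝ᵥ x) < 0 := by
      have h1 : 2 * μY * (ε⁻¹ * (Ka + ∑ l, Kc l)) * (x ⬝ᵥ x) ≤ 1 * (x ⬝ᵥ x) :=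
        mul_le_mul_of_nonneg_right hkey1 hxx.le
      have h3 : x ⬝ᵥ MYh *ᵥ x < 0 := by
        by_contra hcon
        push_neg at hcon
        have h5 : 0 ≤ μY * (x ⬝ᵥ MYh *ᵥ x) := mul_nonneg hμY.le hcon
        have h6 := hstar
        nlinarith only [h5, h6, hxx]
      have h7 : μY * (x ⬝ᵥ MYh *ᵥ x + 2 * ((ε⁻¹ * (Ka + ∑ l, Kc l)) * (x ⬝ᵥ x))) ≤ 0 := by
        nlinarith only [h1, hstar]
      have h4 : x ⬝ᵥ MYh *ᵥ x + 2 * ((ε⁻¹ * (Ka + ∑ l, Kc l)) * (x ⬝ᵥ x)) ≤ 0 := by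
        nlinarith only [h7, hμY]
      linarith only [h3, h4, mul_nonneg hA0 hxx.le]
    -- assemble
    have hq : x ⬝ᵥ ((c • Δ + Y) * F + Fᵀ * (c • Δ + Y)
          + ∑ l, (G l)ᵀ * (c • Δ + Y) * G l) *ᵥ x
        = c * (-(u ⬝ᵥ N *ᵥ u) - x ⬝ᵥ S *ᵥ x)
          + (x ⬝ᵥ MYh *ᵥ x + (av ⬝ᵥ u + av ⬝ᵥ u)
            + ∑ l, (al l ⬝ᵥ u + al l ⬝ᵥ u + u ⬝ᵥ (T l) *ᵥ u)) := by
      rw [hmat, Matrix.add_mulVec, Matrix.smul_mulVec, dotProduct_add,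
        dotProduct_smul, smul_eq_mul, eΔ, eY]
    have hcS : 0 ≤ c * (x ⬝ᵥ S *ᵥ x) := mul_nonneg hc.le hS0
    have hfinal : x ⬝ᵥ ((c • Δ + Y) * F + Fᵀ * (c • Δ + Y)
          + ∑ l, (G l)ᵀ * (c • Δ + Y) * G l) *ᵥ x < 0 := by
      rw [hq]
      have hexp0 : c * (-(u ⬝ᵥ N *ᵥ u) - x ⬝ᵥ S *ᵥ x)
          = -(c * (u ⬝ᵥ N *ᵥ u)) - c * (x ⬝ᵥ S *ᵥ x) := by ring
      linarith only [hb1, hbsum, hu2, hqmA, hcS, hKCx, hexp0.le, hexp0.ge]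
    simp only [star_trivial]
    rw [Matrix.neg_mulVec, dotProduct_neg]
    simpa only [hF, hG] using neg_pos.mpr hfinal

/-- The data of the zero-sum linear-quadratic stochastic differential game. -/
structure GameData (n m1 m2 r : ℕ) where
  A : Matrix (Fin n) (Fin n) ℝ
  C : Fin r → Matrix (Fin n) (Fin n) ℝ
  B1 : Matrix (Fin n) (Fin m1) ℝ
  B2 : Matrix (Fin n) (Fin m2) ℝ
  D1 : Fin r → Matrix (Fin n) (Fin m1) ℝ
  D2 : Fin r → Matrix (Fin n) (Fin m2) ℝ
  Q : Matrix (Fin n) (Fin n) ℝ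
  hQ : Q.IsSymm
  S1 : Matrix (Fin m1) (Fin n) ℝ
  S2 : Matrix (Fin m2) (Fin n) ℝ
  R11 : Matrix (Fin m1) (Fin m1) ℝ
  R22 : Matrix (Fin m2) (Fin m2) ℝ
  R12 : Matrix (Fin m1) (Fin m2) ℝ
  hR11 : R11.IsSymm
  hR22 : R22.IsSymm

namespace GameData

variable {n m1 m2 r : ℕ} (g : GameData n m1 m2 r)

/-- The stacked weighting matrix `S = [S_1; S_2]`. -/
def Sw : Matrix (Fin m1 ⊕ Fin m2) (Fin n) ℝ := fromRows g.S1 g.S2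

/-- The full weighting matrix `R = [[R_11, R_12],[R_21, R_22]]` with `R_21 = R_12ᵀ`. -/
def Rw : Matrix (Fin m1 ⊕ Fin m2) (Fin m1 ⊕ Fin m2) ℝ :=
  fromBlocks g.R11 g.R12 g.R12ᵀ g.R22

/-- `S_1(P) = B_1ᵀ P + Σ_l D_{l,1}ᵀ P C_l + S_1`. -/
def S1P (P : Matrix (Fin n) (Fin n) ℝ) : Matrix (Fin m1) (Fin n) ℝ :=
  g.B1ᵀ * P + ∑ l, (g.D1 l)ᵀ * P * g.C l + g.S1

/-- `S_2(P) = B_2ᵀ P + Σ_l D_{l,2}ᵀ P C_l + S_2`. -/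
def S2P (P : Matrix (Fin n) (Fin n) ℝ) : Matrix (Fin m2) (Fin n) ℝ :=
  g.B2ᵀ * P + ∑ l, (g.D2 l)ᵀ * P * g.C l + g.S2

/-- `S(P) = [S_1(P); S_2(P)]`. -/
def SP (P : Matrix (Fin n) (Fin n) ℝ) : Matrix (Fin m1 ⊕ Fin m2) (Fin n) ℝ :=
  fromRows (g.S1P P) (g.S2P P)

/-- `R_11(P)`. -/
def R11P (P : Matrix (Fin n) (Fin n) ℝ) : Matrix (Fin m1) (Fin m1) ℝ :=
  g.R11 + ∑ l, (g.D1 l)ᵀ * P * g.D1 l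

/-- `R_12(P)`. -/
def R12P (P : Matrix (Fin n) (Fin n) ℝ) : Matrix (Fin m1) (Fin m2) ℝ :=
  g.R12 + ∑ l, (g.D1 l)ᵀ * P * g.D2 l

/-- `R_21(P)`. -/
def R21P (P : Matrix (Fin n) (Fin n) ℝ) : Matrix (Fin m2) (Fin m1) ℝ :=
  g.R12ᵀ + ∑ l, (g.D2 l)ᵀ * P * g.D1 l

/-- `R_22(P)`. -/
def R22P (P : Matrix (Fin n) (Fin n) ℝ) : Matrix (Fin m2) (Fin m2) ℝ :=
  g.R22 + ∑ l, (g.D2 l)ᵀ * P * g.D2 l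

/-- `R(P)` assembled from its blocks. -/
def RP (P : Matrix (Fin n) (Fin n) ℝ) : Matrix (Fin m1 ⊕ Fin m2) (Fin m1 ⊕ Fin m2) ℝ :=
  fromBlocks (g.R11P P) (g.R12P P) (g.R21P P) (g.R22P P)

/-- `K(P) = −R(P)⁻¹ S(P)` (stacked feedback gain). -/
def KP (P : Matrix (Fin n) (Fin n) ℝ) : Matrix (Fin m1 ⊕ Fin m2) (Fin n) ℝ :=
  -((g.RP P)⁻¹ * g.SP P)

/-- `K_1(P)`: the first block of `K(P)`. -/
def K1 (P : Matrix (Fin n) (Fin n) ℝ) : Matrix (Fin m1) (Fin n) ℝ :=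
  (g.KP P).submatrix Sum.inl id

/-- `K_2(P)`: the second block of `K(P)`. -/
def K2 (P : Matrix (Fin n) (Fin n) ℝ) : Matrix (Fin m2) (Fin n) ℝ :=
  (g.KP P).submatrix Sum.inr id

/-- `G(P) = PA + AᵀP + Σ_l C_lᵀ P C_l + Q − S(P)ᵀ R(P)⁻¹ S(P)`. -/
def GP (P : Matrix (Fin n) (Fin n) ℝ) : Matrix (Fin n) (Fin n) ℝ :=
  P * g.A + g.Aᵀ * P + ∑ l, (g.C l)ᵀ * P * g.C l + g.Q
    - (g.SP P)ᵀ * (g.RP P)⁻¹ * g.SP P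

/-- `A_{K(P)} = A + B_1 K_1(P) + B_2 K_2(P)`. -/
def AK (P : Matrix (Fin n) (Fin n) ℝ) : Matrix (Fin n) (Fin n) ℝ :=
  g.A + g.B1 * g.K1 P + g.B2 * g.K2 P

/-- `C_{l,K(P)} = C_l + D_{l,1} K_1(P) + D_{l,2} K_2(P)`. -/
def CK (P : Matrix (Fin n) (Fin n) ℝ) (l : Fin r) : Matrix (Fin n) (Fin n) ℝ :=
  g.C l + g.D1 l * g.K1 P + g.D2 l * g.K2 P

/-- `N_1(P,Z)`. -/
def N1 (P Z : Matrix (Fin n) (Fin n) ℝ) : Matrix (Fin m1) (Fin n) ℝ :=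
  g.B1ᵀ * Z + ∑ l, (g.D1 l)ᵀ * Z * g.CK P l

/-- `N_2(P,Z)`. -/
def N2 (P Z : Matrix (Fin n) (Fin n) ℝ) : Matrix (Fin m2) (Fin n) ℝ :=
  g.B2ᵀ * Z + ∑ l, (g.D2 l)ᵀ * Z * g.CK P l

/-- `N(P,Z) = [N_1(P,Z); N_2(P,Z)]`. -/
def NP (P Z : Matrix (Fin n) (Fin n) ℝ) : Matrix (Fin m1 ⊕ Fin m2) (Fin n) ℝ :=
  fromRows (g.N1 P Z) (g.N2 P Z)

/-- Membership in `Dom G`: `R_22(P) ≻ 0` and `R_11(P) ≺ 0`. -/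
def MemDomG (P : Matrix (Fin n) (Fin n) ℝ) : Prop :=
  (g.R22P P).PosDef ∧ (-(g.R11P P)).PosDef

/-- `Z` satisfies the inner Riccati equation at `P`. -/
def InnerRiccati (P Z : Matrix (Fin n) (Fin n) ℝ) : Prop :=
  g.GP P + Z * g.AK P + (g.AK P)ᵀ * Z + ∑ l, (g.CK P l)ᵀ * Z * g.CK P l
    - (g.N2 P Z)ᵀ * (g.R22P (P + Z))⁻¹ * g.N2 P Z = 0

/-- `A_L = A + B_1 K_1(0) + B_2 K_2(0) + B_2 L`. -/
def AL (L : Matrix (Fin m2) (Fin n) ℝ) : Matrix (Fin n) (Fin n) ℝ :=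
  g.A + g.B1 * g.K1 0 + g.B2 * g.K2 0 + g.B2 * L

/-- `C_{lL} = C_l + D_{l,1} K_1(0) + D_{l,2} K_2(0) + D_{l,2} L`. -/
def CL (L : Matrix (Fin m2) (Fin n) ℝ) (l : Fin r) : Matrix (Fin n) (Fin n) ℝ :=
  g.C l + g.D1 l * g.K1 0 + g.D2 l * g.K2 0 + g.D2 l * L

/-- `Q_L = Q − S(0)ᵀ R(0)⁻¹ S(0) + Lᵀ R_22 L`. -/
def QL (L : Matrix (Fin m2) (Fin n) ℝ) : Matrix (Fin n) (Fin n) ℝ :=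
  g.Q - (g.SP 0)ᵀ * (g.RP 0)⁻¹ * g.SP 0 + Lᵀ * g.R22 * L

/-- `S_L = R_12 L`. -/
def SL (L : Matrix (Fin m2) (Fin n) ℝ) : Matrix (Fin m1) (Fin n) ℝ := g.R12 * L

/-- The linear term `B_1ᵀ P + Σ_l D_{l,1}ᵀ P C_{lL} + S_L` in the `L`-Riccati equation. -/
def S1L (L : Matrix (Fin m2) (Fin n) ℝ) (P : Matrix (Fin n) (Fin n) ℝ) :
    Matrix (Fin m1) (Fin n) ℝ :=
  g.B1ᵀ * P + ∑ l, (g.D1 l)ᵀ * P * g.CL L l + g.SL L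

/-- Left-hand side of the algebraic Riccati equation associated with `L`. -/
def AREL (L : Matrix (Fin m2) (Fin n) ℝ) (P : Matrix (Fin n) (Fin n) ℝ) :
    Matrix (Fin n) (Fin n) ℝ :=
  P * g.AL L + (g.AL L)ᵀ * P + ∑ l, (g.CL L l)ᵀ * P * g.CL L l + g.QL L
    - (g.S1L L P)ᵀ * (g.R11P P)⁻¹ * g.S1L L P

/-- `K_L(P) = −(R_11 + Σ_l D_{l,1}ᵀ P D_{l,1})⁻¹ (B_1ᵀ P + Σ_l D_{l,1}ᵀ P C_{lL} + S_L)`. -/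
def KL (L : Matrix (Fin m2) (Fin n) ℝ) (P : Matrix (Fin n) (Fin n) ℝ) :
    Matrix (Fin m1) (Fin n) ℝ :=
  -((g.R11P P)⁻¹ * g.S1L L P)

/-- `P̃` is a stabilizing solution of the `L`-Riccati equation. -/
def IsStabSolL (L : Matrix (Fin m2) (Fin n) ℝ) (P : Matrix (Fin n) (Fin n) ℝ) : Prop :=
  P.IsSymm ∧ g.AREL L P = 0 ∧ (-(g.R11P P)).PosDef ∧
    MSStable (g.AL L + g.B1 * g.KL L P) (fun l => g.CL L l + g.D1 l * g.KL L P)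

/-- `L ∈ 𝒜`. -/
def MemA (L : Matrix (Fin m2) (Fin n) ℝ) : Prop :=
  MSStable (g.AL L) (g.CL L) ∧ ∃ P, g.IsStabSolL L P

end GameData


namespace GameData

variable {n m1 m2 r : ℕ} (g : GameData n m1 m2 r)

/-- The quadratic functional `Γ(X, F1, F2)` in normal form. -/
def Gam (X : Matrix (Fin n) (Fin n) ℝ) (F1 : Matrix (Fin m1) (Fin n) ℝ)
    (F2 : Matrix (Fin m2) (Fin n) ℝ) : Matrix (Fin n) (Fin n) ℝ :=
  X * g.A + g.Aᵀ * X + (∑ l, (g.C l)ᵀ * X * g.C l) + g.Q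
    + F1ᵀ * g.S1P X + (g.S1P X)ᵀ * F1 + F2ᵀ * g.S2P X + (g.S2P X)ᵀ * F2
    + F1ᵀ * g.R11P X * F1 + F1ᵀ * g.R12P X * F2
    + F2ᵀ * g.R21P X * F1 + F2ᵀ * g.R22P X * F2

section Symm

variable {X : Matrix (Fin n) (Fin n) ℝ}

lemma R11P_t (hX : Xᵀ = X) : (g.R11P X)ᵀ = g.R11P X := by
  simp [R11P, Matrix.transpose_add, Matrix.transpose_sum, Matrix.transpose_mul,
    Matrix.mul_assoc, hX, g.hR11.eq]

lemma R22P_t (hX : Xᵀ = X) : (g.R22P X)ᵀ = g.R22P X := by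
  simp [R22P, Matrix.transpose_add, Matrix.transpose_sum, Matrix.transpose_mul,
    Matrix.mul_assoc, hX, g.hR22.eq]

lemma R12P_t (hX : Xᵀ = X) : (g.R12P X)ᵀ = g.R21P X := by
  simp [R12P, R21P, Matrix.transpose_add, Matrix.transpose_sum, Matrix.transpose_mul,
    Matrix.mul_assoc, hX]

lemma R21P_t (hX : Xᵀ = X) : (g.R21P X)ᵀ = g.R12P X := by
  simp [R12P, R21P, Matrix.transpose_add, Matrix.transpose_sum, Matrix.transpose_mul,
    Matrix.mul_assoc, hX]

end Symm

lemma S1P_zero : g.S1P 0 = g.S1 := by simp [S1P]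
lemma S2P_zero : g.S2P 0 = g.S2 := by simp [S2P]
lemma R11P_zero : g.R11P 0 = g.R11 := by simp [R11P]
lemma R12P_zero : g.R12P 0 = g.R12 := by simp [R12P]
lemma R21P_zero : g.R21P 0 = g.R12ᵀ := by simp [R21P]
lemma R22P_zero : g.R22P 0 = g.R22 := by simp [R22P]

/-- Closed-loop expansion of `Γ`. -/
lemma gam_closed (X : Matrix (Fin n) (Fin n) ℝ) (F1 : Matrix (Fin m1) (Fin n) ℝ)
    (F2 : Matrix (Fin m2) (Fin n) ℝ) (hX : Xᵀ = X) :
    g.Gam X F1 F2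
      = X * (g.A + g.B1 * F1 + g.B2 * F2) + (g.A + g.B1 * F1 + g.B2 * F2)ᵀ * X
        + (∑ l, (g.C l + g.D1 l * F1 + g.D2 l * F2)ᵀ * X * (g.C l + g.D1 l * F1 + g.D2 l * F2))
        + (g.Q + F1ᵀ * g.S1 + g.S1ᵀ * F1 + F2ᵀ * g.S2 + g.S2ᵀ * F2
          + F1ᵀ * g.R11 * F1 + F1ᵀ * g.R12 * F2 + F2ᵀ * g.R12ᵀ * F1 + F2ᵀ * g.R22 * F2) := by
  unfold Gam S1P S2P R11P R12P R21P R22P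
  simp only [Matrix.transpose_add, Matrix.transpose_mul, Matrix.transpose_sum,
    Matrix.transpose_transpose, Matrix.add_mul, Matrix.mul_add,
    Finset.sum_add_distrib, Matrix.mul_sum, Matrix.sum_mul, Matrix.mul_assoc, hX]
  abel

/-- Affinity of `Γ` in the `X` variable. -/
lemma gam_add (X Z : Matrix (Fin n) (Fin n) ℝ) (F1 : Matrix (Fin m1) (Fin n) ℝ)
    (F2 : Matrix (Fin m2) (Fin n) ℝ) (hX : Xᵀ = X) (hZ : Zᵀ = Z) :
    g.Gam (X + Z) F1 F2
      = g.Gam X F1 F2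
        + (Z * (g.A + g.B1 * F1 + g.B2 * F2) + (g.A + g.B1 * F1 + g.B2 * F2)ᵀ * Z
          + ∑ l, (g.C l + g.D1 l * F1 + g.D2 l * F2)ᵀ * Z
              * (g.C l + g.D1 l * F1 + g.D2 l * F2)) := by
  rw [g.gam_closed (X + Z) F1 F2 (by rw [Matrix.transpose_add, hX, hZ]),
    g.gam_closed X F1 F2 hX]
  simp only [Matrix.add_mul, Matrix.mul_add, Finset.sum_add_distrib]
  abel

/-- Quadratic expansion of `Γ` in the feedback variables. -/
lemma gam_expand (X : Matrix (Fin n) (Fin n) ℝ) (F1 E1 : Matrix (Fin m1) (Fin n) ℝ)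
    (F2 E2 : Matrix (Fin m2) (Fin n) ℝ) (hX : Xᵀ = X) :
    g.Gam X (F1 + E1) (F2 + E2)
      = g.Gam X F1 F2
        + E1ᵀ * (g.S1P X + g.R11P X * F1 + g.R12P X * F2)
        + (g.S1P X + g.R11P X * F1 + g.R12P X * F2)ᵀ * E1
        + E2ᵀ * (g.S2P X + g.R21P X * F1 + g.R22P X * F2)
        + (g.S2P X + g.R21P X * F1 + g.R22P X * F2)ᵀ * E2
        + E1ᵀ * g.R11P X * E1 + E1ᵀ * g.R12P X * E2
        + E2ᵀ * g.R21P X * E1 + E2ᵀ * g.R22P X * E2 := by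
  unfold Gam
  simp only [Matrix.transpose_add, Matrix.transpose_mul, Matrix.add_mul, Matrix.mul_add,
    Matrix.mul_assoc, g.R11P_t hX, g.R22P_t hX, g.R12P_t hX, g.R21P_t hX]
  abel

/-- Positive definite matrices have unit determinant. -/
lemma _root_.Matrix.PosDef.isUnitDet {k : ℕ} {M : Matrix (Fin k) (Fin k) ℝ}
    (hM : M.PosDef) : IsUnit M.det :=
  isUnit_iff_ne_zero.mpr hM.det_pos.ne'

lemma negdef_isUnitDet {k : ℕ} {M : Matrix (Fin k) (Fin k) ℝ}
    (hM : (-M).PosDef) : IsUnit M.det := by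
  have h := hM.det_pos
  rw [Matrix.det_neg] at h
  refine isUnit_iff_ne_zero.mpr fun h0 => ?_
  rw [h0, mul_zero] at h
  exact lt_irrefl _ h

/-- Real version of `conjTranspose_mul_mul_same`. -/
lemma psd_tr_mul {k k' : ℕ} {M : Matrix (Fin k) (Fin k) ℝ} (hM : M.PosSemidef)
    (B : Matrix (Fin k) (Fin k') ℝ) : (Bᵀ * M * B).PosSemidef := by
  have := hM.conjTranspose_mul_mul_same B
  rwa [Matrix.conjTranspose_eq_transpose_of_trivial] at this

/-- `R(P)` is invertible for `P ∈ Dom G`. -/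
lemma RP_isUnit {P : Matrix (Fin n) (Fin n) ℝ} (hP : P.IsSymm) (hdom : g.MemDomG P) :
    IsUnit (g.RP P).det := by
  obtain ⟨h22, h11⟩ := hdom
  have i22 : Invertible (g.R22P P) := Matrix.invertibleOfIsUnitDet _ h22.isUnitDet
  have hinvpsd : ((g.R22P P)⁻¹).PosSemidef := h22.inv.posSemidef
  have hT : (g.R12P P * ⅟(g.R22P P) * g.R21P P).PosSemidef := by
    rw [invOf_eq_nonsing_inv, ← g.R21P_t hP]
    exact psd_tr_mul hinvpsd (g.R21P P)
  have hSchur : (-(g.R11P P - g.R12P P * ⅟(g.R22P P) * g.R21P P)).PosDef := by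
    rw [show -(g.R11P P - g.R12P P * ⅟(g.R22P P) * g.R21P P)
        = -(g.R11P P) + g.R12P P * ⅟(g.R22P P) * g.R21P P by abel]
    exact h11.add_posSemidef hT
  have iS : Invertible (g.R11P P - g.R12P P * ⅟(g.R22P P) * g.R21P P) :=
    Matrix.invertibleOfIsUnitDet _ (negdef_isUnitDet hSchur)
  have : Invertible (g.RP P) := Matrix.fromBlocks₂₂Invertible _ _ _ _
  exact Matrix.isUnit_det_of_invertible _

/-- The defining relation `R(P) K(P) = -S(P)`. -/
lemma RP_mul_KP {P : Matrix (Fin n) (Fin n) ℝ} (hP : P.IsSymm) (hdom : g.MemDomG P) :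
    g.RP P * g.KP P = -(g.SP P) := by
  rw [KP, Matrix.mul_neg, ← Matrix.mul_assoc,
    Matrix.mul_nonsing_inv _ (g.RP_isUnit hP hdom), Matrix.one_mul]

lemma K_eq1 {P : Matrix (Fin n) (Fin n) ℝ} (hP : P.IsSymm) (hdom : g.MemDomG P) :
    g.R11P P * g.K1 P + g.R12P P * g.K2 P = -(g.S1P P) := by
  have h := g.RP_mul_KP hP hdom
  ext i j
  have h' := congrFun (congrFun h (Sum.inl i)) j
  simp only [Matrix.mul_apply, Fintype.sum_sum_type, RP, SP,
    Matrix.fromBlocks_apply₁₁, Matrix.fromBlocks_apply₁₂, Matrix.neg_apply,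
    Matrix.fromRows_apply_inl] at h'
  simpa [Matrix.add_apply, Matrix.mul_apply, K1, K2, Matrix.neg_apply] using h'

lemma K_eq2 {P : Matrix (Fin n) (Fin n) ℝ} (hP : P.IsSymm) (hdom : g.MemDomG P) :
    g.R21P P * g.K1 P + g.R22P P * g.K2 P = -(g.S2P P) := by
  have h := g.RP_mul_KP hP hdom
  ext i j
  have h' := congrFun (congrFun h (Sum.inr i)) j
  simp only [Matrix.mul_apply, Fintype.sum_sum_type, RP, SP,
    Matrix.fromBlocks_apply₂₁, Matrix.fromBlocks_apply₂₂, Matrix.neg_apply,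
    Matrix.fromRows_apply_inr] at h'
  simpa [Matrix.add_apply, Matrix.mul_apply, K1, K2, Matrix.neg_apply] using h'

/-- Reduction of the quadratic inverse term. -/
lemma SPRS {P : Matrix (Fin n) (Fin n) ℝ} (hP : P.IsSymm) (hdom : g.MemDomG P) :
    (g.SP P)ᵀ * (g.RP P)⁻¹ * g.SP P
      = -((g.S1P P)ᵀ * g.K1 P + (g.S2P P)ᵀ * g.K2 P) := by
  have h1 : (g.SP P)ᵀ * (g.RP P)⁻¹ * g.SP P = -((g.SP P)ᵀ * g.KP P) := by
    rw [Matrix.mul_assoc, show (g.RP P)⁻¹ * g.SP P = -(g.KP P) by rw [KP, neg_neg],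
      Matrix.mul_neg]
  rw [h1]
  congr 1
  ext i j
  simp [Matrix.mul_apply, Fintype.sum_sum_type, SP, K1, K2,
    Matrix.fromRows_apply_inl, Matrix.fromRows_apply_inr, Matrix.add_apply]

/-- `G(P) = Γ(P, K_1(P), K_2(P))`. -/
lemma GP_eq {P : Matrix (Fin n) (Fin n) ℝ} (hP : P.IsSymm) (hdom : g.MemDomG P) :
    g.GP P = g.Gam P (g.K1 P) (g.K2 P) := by
  have e1 : (g.K1 P)ᵀ * g.R11P P * g.K1 P + (g.K1 P)ᵀ * g.R12P P * g.K2 P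
      = -((g.K1 P)ᵀ * g.S1P P) := by
    rw [Matrix.mul_assoc, Matrix.mul_assoc, ← Matrix.mul_add, g.K_eq1 hP hdom,
      Matrix.mul_neg]
  have e2 : (g.K2 P)ᵀ * g.R21P P * g.K1 P + (g.K2 P)ᵀ * g.R22P P * g.K2 P
      = -((g.K2 P)ᵀ * g.S2P P) := by
    rw [Matrix.mul_assoc, Matrix.mul_assoc, ← Matrix.mul_add, g.K_eq2 hP hdom,
      Matrix.mul_neg]
  have rearr : g.Gam P (g.K1 P) (g.K2 P)
      = P * g.A + g.Aᵀ * P + (∑ l, (g.C l)ᵀ * P * g.C l) + g.Q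
        + (g.K1 P)ᵀ * g.S1P P + (g.S1P P)ᵀ * g.K1 P
        + (g.K2 P)ᵀ * g.S2P P + (g.S2P P)ᵀ * g.K2 P
        + (((g.K1 P)ᵀ * g.R11P P * g.K1 P + (g.K1 P)ᵀ * g.R12P P * g.K2 P)
          + ((g.K2 P)ᵀ * g.R21P P * g.K1 P + (g.K2 P)ᵀ * g.R22P P * g.K2 P)) := by
    unfold Gam; abel
  rw [rearr, e1, e2]
  unfold GP
  rw [g.SPRS hP hdom]
  abel

/-- The `L`-game quadratic functional. -/
def LamL (L : Matrix (Fin m2) (Fin n) ℝ) (X : Matrix (Fin n) (Fin n) ℝ)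
    (F1' : Matrix (Fin m1) (Fin n) ℝ) : Matrix (Fin n) (Fin n) ℝ :=
  X * g.AL L + (g.AL L)ᵀ * X + (∑ l, (g.CL L l)ᵀ * X * g.CL L l) + g.QL L
    + F1'ᵀ * g.S1L L X + (g.S1L L X)ᵀ * F1' + F1'ᵀ * g.R11P X * F1'

lemma lamL_expand (L : Matrix (Fin m2) (Fin n) ℝ) (X : Matrix (Fin n) (Fin n) ℝ)
    (F1' E : Matrix (Fin m1) (Fin n) ℝ) (hX : Xᵀ = X) :
    g.LamL L X (F1' + E)
      = g.LamL L X F1' + Eᵀ * (g.S1L L X + g.R11P X * F1')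
        + (g.S1L L X + g.R11P X * F1')ᵀ * E + Eᵀ * g.R11P X * E := by
  unfold LamL
  simp only [Matrix.transpose_add, Matrix.transpose_mul, Matrix.add_mul, Matrix.mul_add,
    Matrix.mul_assoc, g.R11P_t hX]
  abel

lemma R11P_mul_KL (L : Matrix (Fin m2) (Fin n) ℝ) (X : Matrix (Fin n) (Fin n) ℝ)
    (h : IsUnit (g.R11P X).det) : g.R11P X * g.KL L X = -(g.S1L L X) := by
  rw [KL, Matrix.mul_neg, ← Matrix.mul_assoc, Matrix.mul_nonsing_inv _ h, Matrix.one_mul]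

lemma lamL_KL (L : Matrix (Fin m2) (Fin n) ℝ) (X : Matrix (Fin n) (Fin n) ℝ)
    (h : IsUnit (g.R11P X).det) (hARE : g.AREL L X = 0) :
    g.LamL L X (g.KL L X) = 0 := by
  have h2 : (g.KL L X)ᵀ * g.R11P X * g.KL L X = -((g.KL L X)ᵀ * g.S1L L X) := by
    rw [Matrix.mul_assoc, g.R11P_mul_KL L X h, Matrix.mul_neg]
  have h3 : (g.S1L L X)ᵀ * g.KL L X
      = -((g.S1L L X)ᵀ * (g.R11P X)⁻¹ * g.S1L L X) := by
    rw [KL, Matrix.mul_neg, Matrix.mul_assoc]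
  unfold LamL
  rw [h2, h3, ← hARE]
  unfold AREL
  abel

lemma symm_zero' {k : ℕ} : (0 : Matrix (Fin k) (Fin k) ℝ).IsSymm := by
  simp [Matrix.IsSymm]

lemma K0_eq1 (hdom0 : g.MemDomG 0) : g.R11 * g.K1 0 + g.R12 * g.K2 0 = -(g.S1) := by
  have h := g.K_eq1 symm_zero' hdom0
  rwa [g.S1P_zero, g.R11P_zero, g.R12P_zero] at h

lemma K0_eq2 (hdom0 : g.MemDomG 0) : g.R12ᵀ * g.K1 0 + g.R22 * g.K2 0 = -(g.S2) := by
  have h := g.K_eq2 symm_zero' hdom0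
  rwa [g.S2P_zero, g.R21P_zero, g.R22P_zero] at h

lemma QL_eq (L : Matrix (Fin m2) (Fin n) ℝ) (hdom0 : g.MemDomG 0) :
    g.QL L = g.Q + g.S1ᵀ * g.K1 0 + g.S2ᵀ * g.K2 0 + Lᵀ * g.R22 * L := by
  unfold QL
  rw [g.SPRS symm_zero' hdom0, g.S1P_zero, g.S2P_zero]
  abel

lemma gam00 (X : Matrix (Fin n) (Fin n) ℝ) (hX : Xᵀ = X) (hdom0 : g.MemDomG 0) :
    g.Gam X (g.K1 0) (g.K2 0)
      = X * (g.A + g.B1 * g.K1 0 + g.B2 * g.K2 0)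
        + (g.A + g.B1 * g.K1 0 + g.B2 * g.K2 0)ᵀ * X
        + (∑ l, (g.C l + g.D1 l * g.K1 0 + g.D2 l * g.K2 0)ᵀ * X
            * (g.C l + g.D1 l * g.K1 0 + g.D2 l * g.K2 0))
        + (g.Q + g.S1ᵀ * g.K1 0 + g.S2ᵀ * g.K2 0) := by
  have e1 : (g.K1 0)ᵀ * g.R11 * g.K1 0 + (g.K1 0)ᵀ * g.R12 * g.K2 0
      = -((g.K1 0)ᵀ * g.S1) := by
    rw [Matrix.mul_assoc, Matrix.mul_assoc, ← Matrix.mul_add, g.K0_eq1 hdom0,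
      Matrix.mul_neg]
  have e2 : (g.K2 0)ᵀ * g.R12ᵀ * g.K1 0 + (g.K2 0)ᵀ * g.R22 * g.K2 0
      = -((g.K2 0)ᵀ * g.S2) := by
    rw [Matrix.mul_assoc, Matrix.mul_assoc, ← Matrix.mul_add, g.K0_eq2 hdom0,
      Matrix.mul_neg]
  rw [g.gam_closed X (g.K1 0) (g.K2 0) hX]
  rw [show g.Q + (g.K1 0)ᵀ * g.S1 + g.S1ᵀ * g.K1 0 + (g.K2 0)ᵀ * g.S2 + g.S2ᵀ * g.K2 0
      + (g.K1 0)ᵀ * g.R11 * g.K1 0 + (g.K1 0)ᵀ * g.R12 * g.K2 0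
      + (g.K2 0)ᵀ * g.R12ᵀ * g.K1 0 + (g.K2 0)ᵀ * g.R22 * g.K2 0
      = g.Q + (g.K1 0)ᵀ * g.S1 + g.S1ᵀ * g.K1 0 + (g.K2 0)ᵀ * g.S2 + g.S2ᵀ * g.K2 0
        + (((g.K1 0)ᵀ * g.R11 * g.K1 0 + (g.K1 0)ᵀ * g.R12 * g.K2 0)
          + ((g.K2 0)ᵀ * g.R12ᵀ * g.K1 0 + (g.K2 0)ᵀ * g.R22 * g.K2 0)) from by abel,
    e1, e2]
  abel

lemma bridge (L : Matrix (Fin m2) (Fin n) ℝ) (X : Matrix (Fin n) (Fin n) ℝ)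
    (F1' : Matrix (Fin m1) (Fin n) ℝ) (hX : Xᵀ = X) (hdom0 : g.MemDomG 0) :
    g.Gam X (g.K1 0 + F1') (g.K2 0 + L) = g.LamL L X F1' := by
  have hz1 : g.R11 * g.K1 0 + g.R12 * g.K2 0 = -(g.S1) := g.K0_eq1 hdom0
  have hγ1 : g.S1P X + g.R11P X * g.K1 0 + g.R12P X * (g.K2 0 + L) = g.S1L L X := by
    have e : g.S1P X + g.R11P X * g.K1 0 + g.R12P X * (g.K2 0 + L)
        = g.S1L L X + (g.S1 + (g.R11 * g.K1 0 + g.R12 * g.K2 0)) := by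
      unfold S1P R11P R12P S1L SL CL
      simp only [Matrix.mul_add, Matrix.add_mul, Matrix.sum_mul, Matrix.mul_sum,
        Finset.sum_add_distrib, Matrix.mul_assoc]
      abel
    rw [e, hz1]
    simp
  have hγ2 : g.S2P X + g.R21P X * g.K1 0 + g.R22P X * g.K2 0
      = g.B2ᵀ * X + ∑ l, (g.D2 l)ᵀ * X
          * (g.C l + g.D1 l * g.K1 0 + g.D2 l * g.K2 0) := by
    have e : g.S2P X + g.R21P X * g.K1 0 + g.R22P X * g.K2 0
        = (g.B2ᵀ * X + ∑ l, (g.D2 l)ᵀ * X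
            * (g.C l + g.D1 l * g.K1 0 + g.D2 l * g.K2 0))
          + (g.S2 + (g.R12ᵀ * g.K1 0 + g.R22 * g.K2 0)) := by
      unfold S2P R21P R22P
      simp only [Matrix.mul_add, Matrix.add_mul, Matrix.sum_mul, Matrix.mul_sum,
        Finset.sum_add_distrib, Matrix.mul_assoc]
      abel
    rw [e, g.K0_eq2 hdom0]
    simp
  have hB := g.gam_expand X (g.K1 0) 0 (g.K2 0) L hX
  simp only [add_zero, Matrix.transpose_zero, Matrix.zero_mul, Matrix.mul_zero,
    Matrix.mul_assoc] at hB
  have hcore : g.Gam X (g.K1 0) (g.K2 0 + L)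
      = X * g.AL L + (g.AL L)ᵀ * X + (∑ l, (g.CL L l)ᵀ * X * g.CL L l) + g.QL L := by
    rw [hB, g.gam00 X hX hdom0]
    rw [show g.S2P X + g.R21P X * g.K1 0 + g.R22P X * g.K2 0
        = g.B2ᵀ * X + ∑ l, (g.D2 l)ᵀ * X
            * (g.C l + g.D1 l * g.K1 0 + g.D2 l * g.K2 0) from hγ2]
    rw [g.QL_eq L hdom0]
    unfold AL CL R22P
    simp only [Matrix.transpose_add, Matrix.transpose_mul, Matrix.transpose_sum,
      Matrix.transpose_transpose, Matrix.add_mul, Matrix.mul_add, Matrix.sum_mul,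
      Matrix.mul_sum, Finset.sum_add_distrib, Matrix.mul_assoc, hX]
    abel
  have hA := g.gam_expand X (g.K1 0) F1' (g.K2 0 + L) 0 hX
  simp only [add_zero, Matrix.transpose_zero, Matrix.zero_mul, Matrix.mul_zero] at hA
  rw [hA, hγ1, hcore]
  unfold LamL
  abel

end GameData

/-- Lemma, part (ii): under the stated hypotheses, if `P̃_L ⪰ P + Z`, then
the closed-loop system formed with `K_1(P+Z)` and `K_2(0) + L` is mean-square stable. -/
theorem statement11 {n m1 m2 r : ℕ} (g : GameData n m1 m2 r)
    (hdom0 : g.MemDomG 0)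
    (L : Matrix (Fin m2) (Fin n) ℝ) (hL : g.MemA L)
    (Ptilde : Matrix (Fin n) (Fin n) ℝ) (hPtilde : g.IsStabSolL L Ptilde)
    (P Z : Matrix (Fin n) (Fin n) ℝ) (hP : P.IsSymm) (hZ : Z.IsSymm)
    (hdomP : g.MemDomG P) (hdomPZ : g.MemDomG (P + Z))
    (hinner : g.InnerRiccati P Z)
    (hle : (Ptilde - (P + Z)).PosSemidef) :
    MSStable
      (g.A + g.B1 * g.K1 (P + Z) + g.B2 * g.K2 0 + g.B2 * L)
      (fun l => g.C l + g.D1 l * g.K1 (P + Z) + g.D2 l * g.K2 0 + g.D2 l * L) := by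
  classical
  obtain ⟨hPtsymm, hARE, hR11neg, hstab⟩ := hPtilde
  have hPs : Pᵀ = P := hP
  have hZs : Zᵀ = Z := hZ
  have hWsymm : (P + Z)ᵀ = P + Z := by rw [Matrix.transpose_add, hPs, hZs]
  have hPttr : Ptildeᵀ = Ptilde := hPtsymm
  have h22det : IsUnit (g.R22P (P + Z)).det := hdomPZ.1.isUnitDet
  have hR11det : IsUnit (g.R11P Ptilde).det := GameData.negdef_isUnitDet hR11neg
  have hcan : ∀ M : Matrix (Fin m2) (Fin n) ℝ,
      g.R22P (P + Z) * ((g.R22P (P + Z))⁻¹ * M) = M := fun M => by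
    rw [← Matrix.mul_assoc, Matrix.mul_nonsing_inv _ h22det, Matrix.one_mul]
  have hinvT : ((g.R22P (P + Z))⁻¹)ᵀ = (g.R22P (P + Z))⁻¹ := by
    rw [Matrix.transpose_nonsing_inv, g.R22P_t hWsymm]
  -- Step 1 : value of Γ at (K1(P), K2(P))
  have h1 : g.Gam (P + Z) (g.K1 P) (g.K2 P)
      = (g.N2 P Z)ᵀ * (g.R22P (P + Z))⁻¹ * g.N2 P Z := by
    have hadd := g.gam_add P Z (g.K1 P) (g.K2 P) hPs hZs
    have hIR := hinner
    unfold GameData.InnerRiccati at hIR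
    rw [sub_eq_zero] at hIR
    rw [hadd, ← g.GP_eq hP hdomP, ← hIR]
    unfold GameData.AK GameData.CK
    abel
  -- Step 2 : formula for N2
  have hN2 : g.N2 P Z
      = g.S2P (P + Z) + g.R21P (P + Z) * g.K1 P + g.R22P (P + Z) * g.K2 P := by
    have halg : g.S2P (P + Z) + g.R21P (P + Z) * g.K1 P + g.R22P (P + Z) * g.K2 P
        = (g.S2P P + (g.R21P P * g.K1 P + g.R22P P * g.K2 P)) + g.N2 P Z := by
      unfold GameData.S2P GameData.R21P GameData.R22P GameData.N2 GameData.CK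
      simp only [Matrix.mul_add, Matrix.add_mul, Matrix.sum_mul, Matrix.mul_sum,
        Finset.sum_add_distrib, Matrix.mul_assoc]
      abel
    rw [halg, g.K_eq2 hP hdomP]
    simp
  -- Step 3 : Γ(W, K1(P), F2*) = 0
  have h3 : g.Gam (P + Z) (g.K1 P)
      (g.K2 P - (g.R22P (P + Z))⁻¹ * g.N2 P Z) = 0 := by
    have hexp := g.gam_expand (P + Z) (g.K1 P) 0
      (g.K2 P - (g.R22P (P + Z))⁻¹ * g.N2 P Z) ((g.R22P (P + Z))⁻¹ * g.N2 P Z) hWsymm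
    rw [show g.K2 P - (g.R22P (P + Z))⁻¹ * g.N2 P Z + (g.R22P (P + Z))⁻¹ * g.N2 P Z
        = g.K2 P from by abel] at hexp
    have hγ : g.S2P (P + Z) + g.R21P (P + Z) * g.K1 P
        + g.R22P (P + Z) * (g.K2 P - (g.R22P (P + Z))⁻¹ * g.N2 P Z) = 0 := by
      rw [Matrix.mul_sub, hcan, hN2]
      abel
    rw [hγ] at hexp
    have hquad : ((g.R22P (P + Z))⁻¹ * g.N2 P Z)ᵀ * g.R22P (P + Z)
        * ((g.R22P (P + Z))⁻¹ * g.N2 P Z)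
        = (g.N2 P Z)ᵀ * (g.R22P (P + Z))⁻¹ * g.N2 P Z := by
      rw [Matrix.transpose_mul, hinvT]
      simp only [Matrix.mul_assoc]
      rw [hcan]
    rw [hquad, ← h1] at hexp
    simp only [add_zero, Matrix.transpose_zero, Matrix.zero_mul, Matrix.mul_zero,
      zero_add] at hexp
    exact right_eq_add.mp hexp
  -- gradients vanish at (K1(W), K2(W))
  have hgrad1W : g.S1P (P + Z) + g.R11P (P + Z) * g.K1 (P + Z)
      + g.R12P (P + Z) * g.K2 (P + Z) = 0 := by
    rw [add_assoc, g.K_eq1 hWsymm hdomPZ, add_neg_cancel]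
  have hgrad2W : g.S2P (P + Z) + g.R21P (P + Z) * g.K1 (P + Z)
      + g.R22P (P + Z) * g.K2 (P + Z) = 0 := by
    rw [add_assoc, g.K_eq2 hWsymm hdomPZ, add_neg_cancel]
  -- Step 4 : identify F2* - K2(W)
  have hδ2 : g.K2 P - (g.R22P (P + Z))⁻¹ * g.N2 P Z
      = g.K2 (P + Z)
        + -((g.R22P (P + Z))⁻¹ * (g.R21P (P + Z) * (g.K1 P - g.K1 (P + Z)))) := by
    have hS2W : g.S2P (P + Z)
        = -(g.R21P (P + Z) * g.K1 (P + Z) + g.R22P (P + Z) * g.K2 (P + Z)) := by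
      rw [g.K_eq2 hWsymm hdomPZ, neg_neg]
    have hN2' : g.N2 P Z
        = g.R21P (P + Z) * (g.K1 P - g.K1 (P + Z))
          + g.R22P (P + Z) * (g.K2 P - g.K2 (P + Z)) := by
      rw [hN2, hS2W]
      simp only [Matrix.mul_sub]
      abel
    have hc2 : (g.R22P (P + Z))⁻¹ * (g.R22P (P + Z) * (g.K2 P - g.K2 (P + Z)))
        = g.K2 P - g.K2 (P + Z) := by
      rw [← Matrix.mul_assoc, Matrix.nonsing_inv_mul _ h22det, Matrix.one_mul]
    rw [hN2', Matrix.mul_add, hc2]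
    abel
  -- Step 5 : expansion at the critical point (K1(W), K2(W))
  have h6 := g.gam_expand (P + Z) (g.K1 (P + Z)) (g.K1 P - g.K1 (P + Z))
    (g.K2 (P + Z))
    (-((g.R22P (P + Z))⁻¹ * (g.R21P (P + Z) * (g.K1 P - g.K1 (P + Z))))) hWsymm
  rw [hgrad1W, hgrad2W,
    show g.K1 (P + Z) + (g.K1 P - g.K1 (P + Z)) = g.K1 P from by abel,
    ← hδ2, h3] at h6
  simp only [Matrix.transpose_zero, Matrix.zero_mul, Matrix.mul_zero, add_zero,
    zero_add] at h6
  -- compute the three cross terms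
  have e_a : (g.K1 P - g.K1 (P + Z))ᵀ * g.R12P (P + Z)
      * (-((g.R22P (P + Z))⁻¹ * (g.R21P (P + Z) * (g.K1 P - g.K1 (P + Z)))))
      = -((g.R21P (P + Z) * (g.K1 P - g.K1 (P + Z)))ᵀ * (g.R22P (P + Z))⁻¹
          * (g.R21P (P + Z) * (g.K1 P - g.K1 (P + Z)))) := by
    rw [← g.R21P_t hWsymm, ← Matrix.transpose_mul, Matrix.mul_neg]
    simp only [Matrix.mul_assoc]
  have e_b : (-((g.R22P (P + Z))⁻¹ * (g.R21P (P + Z) * (g.K1 P - g.K1 (P + Z)))))ᵀ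
      * g.R21P (P + Z) * (g.K1 P - g.K1 (P + Z))
      = -((g.R21P (P + Z) * (g.K1 P - g.K1 (P + Z)))ᵀ * (g.R22P (P + Z))⁻¹
          * (g.R21P (P + Z) * (g.K1 P - g.K1 (P + Z)))) := by
    rw [Matrix.transpose_neg, Matrix.transpose_mul, hinvT, Matrix.neg_mul,
      Matrix.neg_mul]
    simp only [Matrix.mul_assoc]
  have e_c : (-((g.R22P (P + Z))⁻¹ * (g.R21P (P + Z) * (g.K1 P - g.K1 (P + Z)))))ᵀ
      * g.R22P (P + Z)
      * (-((g.R22P (P + Z))⁻¹ * (g.R21P (P + Z) * (g.K1 P - g.K1 (P + Z)))))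
      = (g.R21P (P + Z) * (g.K1 P - g.K1 (P + Z)))ᵀ * (g.R22P (P + Z))⁻¹
          * (g.R21P (P + Z) * (g.K1 P - g.K1 (P + Z))) := by
    simp only [Matrix.transpose_neg, Matrix.transpose_mul, hinvT, Matrix.neg_mul,
      Matrix.mul_neg, neg_neg, Matrix.mul_assoc]
    rw [hcan]
  rw [e_a, e_b, e_c] at h6
  -- Step 6 : Γ(W, K1(W), K2(W)) is positive semidefinite
  have hGamW0 : g.Gam (P + Z) (g.K1 (P + Z)) (g.K2 (P + Z))
      = (g.K1 P - g.K1 (P + Z))ᵀ * (-(g.R11P (P + Z))) * (g.K1 P - g.K1 (P + Z))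
        + (g.R21P (P + Z) * (g.K1 P - g.K1 (P + Z)))ᵀ * (g.R22P (P + Z))⁻¹
          * (g.R21P (P + Z) * (g.K1 P - g.K1 (P + Z))) := by
    rw [Matrix.mul_neg, Matrix.neg_mul]
    rw [show g.Gam (P + Z) (g.K1 (P + Z)) (g.K2 (P + Z))
        = (g.Gam (P + Z) (g.K1 (P + Z)) (g.K2 (P + Z))
            + (g.K1 P - g.K1 (P + Z))ᵀ * g.R11P (P + Z) * (g.K1 P - g.K1 (P + Z))
            + -((g.R21P (P + Z) * (g.K1 P - g.K1 (P + Z)))ᵀ * (g.R22P (P + Z))⁻¹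
                * (g.R21P (P + Z) * (g.K1 P - g.K1 (P + Z))))
            + -((g.R21P (P + Z) * (g.K1 P - g.K1 (P + Z)))ᵀ * (g.R22P (P + Z))⁻¹
                * (g.R21P (P + Z) * (g.K1 P - g.K1 (P + Z))))
            + (g.R21P (P + Z) * (g.K1 P - g.K1 (P + Z)))ᵀ * (g.R22P (P + Z))⁻¹
                * (g.R21P (P + Z) * (g.K1 P - g.K1 (P + Z))))
          + (-((g.K1 P - g.K1 (P + Z))ᵀ * g.R11P (P + Z) * (g.K1 P - g.K1 (P + Z)))
            + (g.R21P (P + Z) * (g.K1 P - g.K1 (P + Z)))ᵀ * (g.R22P (P + Z))⁻¹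
                * (g.R21P (P + Z) * (g.K1 P - g.K1 (P + Z)))) from by abel]
    rw [← h6, zero_add]
  have hGamW0psd : (g.Gam (P + Z) (g.K1 (P + Z)) (g.K2 (P + Z))).PosSemidef := by
    rw [hGamW0]
    exact (GameData.psd_tr_mul hdomPZ.2.posSemidef _).add
      (GameData.psd_tr_mul hdomPZ.1.inv.posSemidef _)
  -- Step 7 : Γ(W, K1(W), K2(0)+L) is positive semidefinite
  have h7 := g.gam_expand (P + Z) (g.K1 (P + Z)) 0 (g.K2 (P + Z))
    (g.K2 0 + L - g.K2 (P + Z)) hWsymm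
  rw [hgrad1W, hgrad2W,
    show g.K2 (P + Z) + (g.K2 0 + L - g.K2 (P + Z)) = g.K2 0 + L from by abel] at h7
  simp only [Matrix.transpose_zero, Matrix.zero_mul, Matrix.mul_zero, add_zero,
    zero_add] at h7
  have hSm : (g.Gam (P + Z) (g.K1 (P + Z)) (g.K2 0 + L)).PosSemidef := by
    rw [h7]
    exact hGamW0psd.add (GameData.psd_tr_mul hdomPZ.1.posSemidef _)
  -- Step 8 : value of Γ at P̃
  have h8 : g.Gam Ptilde (g.K1 (P + Z)) (g.K2 0 + L)
      = (g.K1 (P + Z) - g.K1 0 - g.KL L Ptilde)ᵀ * g.R11P Ptilde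
          * (g.K1 (P + Z) - g.K1 0 - g.KL L Ptilde) := by
    have hbr := g.bridge L Ptilde (g.K1 (P + Z) - g.K1 0) hPttr hdom0
    rw [show g.K1 0 + (g.K1 (P + Z) - g.K1 0) = g.K1 (P + Z) from by abel,
      show g.K1 (P + Z) - g.K1 0
        = g.KL L Ptilde + (g.K1 (P + Z) - g.K1 0 - g.KL L Ptilde) from by abel,
      g.lamL_expand L Ptilde (g.KL L Ptilde)
        (g.K1 (P + Z) - g.K1 0 - g.KL L Ptilde) hPttr,
      g.lamL_KL L Ptilde hR11det hARE,
      show g.S1L L Ptilde + g.R11P Ptilde * g.KL L Ptilde = 0 from by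
        rw [g.R11P_mul_KL L Ptilde hR11det, add_neg_cancel]] at hbr
    simp only [Matrix.transpose_zero, Matrix.zero_mul, Matrix.mul_zero, add_zero,
      zero_add] at hbr
    exact hbr
  -- Step 9 : the Lyapunov-type identity for Δ = P̃ - W
  have hΔsymm : (Ptilde - (P + Z))ᵀ = Ptilde - (P + Z) := by
    rw [Matrix.transpose_sub, hPttr, hWsymm]
  have h9 := g.gam_add (P + Z) (Ptilde - (P + Z)) (g.K1 (P + Z)) (g.K2 0 + L)
    hWsymm hΔsymm
  rw [show P + Z + (Ptilde - (P + Z)) = Ptilde from by abel, h8] at h9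
  have hkey : (Ptilde - (P + Z)) * (g.A + g.B1 * g.K1 (P + Z) + g.B2 * (g.K2 0 + L))
      + (g.A + g.B1 * g.K1 (P + Z) + g.B2 * (g.K2 0 + L))ᵀ * (Ptilde - (P + Z))
      + ∑ l, (g.C l + g.D1 l * g.K1 (P + Z) + g.D2 l * (g.K2 0 + L))ᵀ
          * (Ptilde - (P + Z))
          * (g.C l + g.D1 l * g.K1 (P + Z) + g.D2 l * (g.K2 0 + L))
      = -((g.K1 (P + Z) - g.K1 0 - g.KL L Ptilde)ᵀ * (-(g.R11P Ptilde))
          * (g.K1 (P + Z) - g.K1 0 - g.KL L Ptilde))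
        - g.Gam (P + Z) (g.K1 (P + Z)) (g.K2 0 + L) := by
    rw [Matrix.mul_neg, Matrix.neg_mul, neg_neg, h9]
    abel
  -- Step 10 : conclude via the perturbation lemma
  have hFeq : g.AL L + g.B1 * g.KL L Ptilde
      + g.B1 * (g.K1 (P + Z) - g.K1 0 - g.KL L Ptilde)
      = g.A + g.B1 * g.K1 (P + Z) + g.B2 * (g.K2 0 + L) := by
    unfold GameData.AL
    simp only [Matrix.mul_sub, Matrix.mul_add]
    abel
  have hGeq : ∀ l, g.CL L l + g.D1 l * g.KL L Ptilde
      + g.D1 l * (g.K1 (P + Z) - g.K1 0 - g.KL L Ptilde)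
      = g.C l + g.D1 l * g.K1 (P + Z) + g.D2 l * (g.K2 0 + L) := by
    intro l
    unfold GameData.CL
    simp only [Matrix.mul_sub, Matrix.mul_add]
    abel
  have heqm : (Ptilde - (P + Z)) * (g.AL L + g.B1 * g.KL L Ptilde
        + g.B1 * (g.K1 (P + Z) - g.K1 0 - g.KL L Ptilde))
      + (g.AL L + g.B1 * g.KL L Ptilde
        + g.B1 * (g.K1 (P + Z) - g.K1 0 - g.KL L Ptilde))ᵀ * (Ptilde - (P + Z))
      + ∑ l, (g.CL L l + g.D1 l * g.KL L Ptilde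
          + g.D1 l * (g.K1 (P + Z) - g.K1 0 - g.KL L Ptilde))ᵀ
          * (Ptilde - (P + Z))
          * (g.CL L l + g.D1 l * g.KL L Ptilde
            + g.D1 l * (g.K1 (P + Z) - g.K1 0 - g.KL L Ptilde))
      = -((g.K1 (P + Z) - g.K1 0 - g.KL L Ptilde)ᵀ * (-(g.R11P Ptilde))
          * (g.K1 (P + Z) - g.K1 0 - g.KL L Ptilde))
        - g.Gam (P + Z) (g.K1 (P + Z)) (g.K2 0 + L) := by
    simp only [hFeq, hGeq]
    exact hkey
  have happ := msstable_perturb (g.AL L + g.B1 * g.KL L Ptilde)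
    (fun l => g.CL L l + g.D1 l * g.KL L Ptilde) g.B1 g.D1
    (g.K1 (P + Z) - g.K1 0 - g.KL L Ptilde) (-(g.R11P Ptilde)) hR11neg
    (Ptilde - (P + Z)) (g.Gam (P + Z) (g.K1 (P + Z)) (g.K2 0 + L))
    hle hSm hstab heqm
  have hF2 : g.AL L + g.B1 * g.KL L Ptilde
      + g.B1 * (g.K1 (P + Z) - g.K1 0 - g.KL L Ptilde)
      = g.A + g.B1 * g.K1 (P + Z) + g.B2 * g.K2 0 + g.B2 * L := by
    unfold GameData.AL
    simp only [Matrix.mul_sub, Matrix.mul_add]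
    abel
  have hG2 : (fun l => g.CL L l + g.D1 l * g.KL L Ptilde
      + g.D1 l * (g.K1 (P + Z) - g.K1 0 - g.KL L Ptilde))
      = fun l => g.C l + g.D1 l * g.K1 (P + Z) + g.D2 l * g.K2 0 + g.D2 l * L := by
    funext l
    unfold GameData.CL
    simp only [Matrix.mul_sub, Matrix.mul_add]
    abel
  rw [hF2, hG2] at happ
  exact happ
end QF
end
end

section
/- Let {P^(k)}_{k≥0} and {Z^(k)}_{k≥0} be sequences of real symmetric n×n matrices with P^(0) = 0 and P^(k+1) = P^(k) + Z^(k) for all k, and suppose R(P^(k)) is invertible for every k. Define A_{(0)} = A + B_1 K_1(0) + B_2 K_2(0), C_{l,(0)} = C_l + D_{l,1} K_1(0) + D_{l,2} K_2(0) (1 ≤ l ≤ r), and recursively for k ≥ 1: A_{(k)} = A_{(k−1)} − [B_1 B_2] R(P^(k))^{-1} N_{(k−1)} and C_{l,(k)} = C_{l,(k−1)} − [D_{l,1} D_{l,2}] R(P^(k))^{-1} N_{(k−1)}, where N_{(k−1)} = [B_1^T Z^(k−1) + Σ_{l=1}^r D_{l,1}^T Z^(k−1) C_{l,(k−1)}; B_2^T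 Z^(k−1) + Σ_{l=1}^r D_{l,2}^T Z^(k−1) C_{l,(k−1)}] (stacked). Then for every k ≥ 0 one has A_{(k)} = A + B_1 K_1(P^(k)) + B_2 K_2(P^(k)) and C_{l,(k)} = C_l + D_{l,1} K_1(P^(k)) + D_{l,2} K_2(P^(k)) for all 1 ≤ l ≤ r. -/
open Matrix BigOperators

noncomputable section

namespace GameData

variable {n m1 m2 r : ℕ} (g : GameData n m1 m2 r)

lemma fromRows_add {m₁ m₂ q : Type*} (A₁ C₁ : Matrix m₁ q ℝ) (A₂ C₂ : Matrix m₂ q ℝ) :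
    fromRows (A₁ + C₁) (A₂ + C₂) = fromRows A₁ A₂ + fromRows C₁ C₂ := by
  ext (i | i) j <;> simp

lemma fromBlocks_add {m₁ m₂ q₁ q₂ : Type*} (A₁₁ B₁₁ : Matrix m₁ q₁ ℝ)
    (A₁₂ B₁₂ : Matrix m₁ q₂ ℝ) (A₂₁ B₂₁ : Matrix m₂ q₁ ℝ) (A₂₂ B₂₂ : Matrix m₂ q₂ ℝ) :
    fromBlocks (A₁₁ + B₁₁) (A₁₂ + B₁₂) (A₂₁ + B₂₁) (A₂₂ + B₂₂) =
      fromBlocks A₁₁ A₁₂ A₂₁ A₂₂ + fromBlocks B₁₁ B₁₂ B₂₁ B₂₂ := by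
  ext (i | i) (j | j) <;> simp

lemma sum_sandwich_add {a b : ℕ} (P Z : Matrix (Fin n) (Fin n) ℝ)
    (D : Fin r → Matrix (Fin n) (Fin a) ℝ) (E : Fin r → Matrix (Fin n) (Fin b) ℝ) :
    ∑ l, (D l)ᵀ * (P + Z) * E l
      = ∑ l, (D l)ᵀ * P * E l + ∑ l, (D l)ᵀ * Z * E l := by
  simp [Matrix.mul_add, Matrix.add_mul, Finset.sum_add_distrib]

lemma S1P_add (P Z : Matrix (Fin n) (Fin n) ℝ) :
    g.S1P (P + Z) = g.S1P P + (g.B1ᵀ * Z + ∑ l, (g.D1 l)ᵀ * Z * g.C l) := by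
  unfold S1P
  rw [sum_sandwich_add]
  simp only [Matrix.mul_add]
  abel

lemma S2P_add (P Z : Matrix (Fin n) (Fin n) ℝ) :
    g.S2P (P + Z) = g.S2P P + (g.B2ᵀ * Z + ∑ l, (g.D2 l)ᵀ * Z * g.C l) := by
  unfold S2P
  rw [sum_sandwich_add]
  simp only [Matrix.mul_add]
  abel

lemma SP_add (P Z : Matrix (Fin n) (Fin n) ℝ) :
    g.SP (P + Z) = g.SP P + fromRows (g.B1ᵀ * Z + ∑ l, (g.D1 l)ᵀ * Z * g.C l)
      (g.B2ᵀ * Z + ∑ l, (g.D2 l)ᵀ * Z * g.C l) := by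
  unfold SP
  rw [g.S1P_add, g.S2P_add, fromRows_add]

lemma RP_add (P Z : Matrix (Fin n) (Fin n) ℝ) :
    g.RP (P + Z) = g.RP P + fromBlocks
      (∑ l, (g.D1 l)ᵀ * Z * g.D1 l) (∑ l, (g.D1 l)ᵀ * Z * g.D2 l)
      (∑ l, (g.D2 l)ᵀ * Z * g.D1 l) (∑ l, (g.D2 l)ᵀ * Z * g.D2 l) := by
  unfold RP R11P R12P R21P R22P
  rw [sum_sandwich_add, sum_sandwich_add, sum_sandwich_add, sum_sandwich_add,
    ← add_assoc, ← add_assoc, ← add_assoc, ← add_assoc, fromBlocks_add]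

lemma KP_eq_fromRows (P : Matrix (Fin n) (Fin n) ℝ) :
    g.KP P = fromRows (g.K1 P) (g.K2 P) :=
  (fromRows_toRows (g.KP P)).symm

/-- The key recursion for the stacked gain `K(P)`. -/
lemma KP_add (P Z : Matrix (Fin n) (Fin n) ℝ) (hP : IsUnit (g.RP P).det)
    (hPZ : IsUnit (g.RP (P + Z)).det) :
    g.KP (P + Z) = g.KP P - (g.RP (P + Z))⁻¹ * g.NP P Z := by
  have n1 : g.N1 P Z = (g.B1ᵀ * Z + ∑ l, (g.D1 l)ᵀ * Z * g.C l)
      + ((∑ l, (g.D1 l)ᵀ * Z * g.D1 l) * g.K1 P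
        + (∑ l, (g.D1 l)ᵀ * Z * g.D2 l) * g.K2 P) := by
    unfold N1 CK
    simp only [Matrix.mul_add, Finset.sum_add_distrib, Matrix.sum_mul, ← Matrix.mul_assoc]
    abel
  have n2 : g.N2 P Z = (g.B2ᵀ * Z + ∑ l, (g.D2 l)ᵀ * Z * g.C l)
      + ((∑ l, (g.D2 l)ᵀ * Z * g.D1 l) * g.K1 P
        + (∑ l, (g.D2 l)ᵀ * Z * g.D2 l) * g.K2 P) := by
    unfold N2 CK
    simp only [Matrix.mul_add, Finset.sum_add_distrib, Matrix.sum_mul, ← Matrix.mul_assoc]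
    abel
  have hN : g.NP P Z = fromRows (g.B1ᵀ * Z + ∑ l, (g.D1 l)ᵀ * Z * g.C l)
        (g.B2ᵀ * Z + ∑ l, (g.D2 l)ᵀ * Z * g.C l)
      + fromBlocks (∑ l, (g.D1 l)ᵀ * Z * g.D1 l) (∑ l, (g.D1 l)ᵀ * Z * g.D2 l)
        (∑ l, (g.D2 l)ᵀ * Z * g.D1 l) (∑ l, (g.D2 l)ᵀ * Z * g.D2 l) * g.KP P := by
    rw [KP_eq_fromRows, fromBlocks_mul_fromRows, ← fromRows_add]
    unfold NP
    rw [n1, n2]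
  have hS : g.SP (P + Z) = g.NP P Z - g.RP (P + Z) * g.KP P := by
    rw [hN, g.SP_add, g.RP_add, Matrix.add_mul]
    have : g.RP P * g.KP P = -(g.SP P) := by
      unfold KP
      rw [Matrix.mul_neg, Matrix.mul_nonsing_inv_cancel_left _ _ hP]
    rw [this]
    abel
  unfold KP
  rw [hS, Matrix.mul_sub, Matrix.nonsing_inv_mul_cancel_left _ _ hPZ]
  simp only [KP]
  abel

/-- Recursion for an arbitrary pair of input matrices multiplying `K₁, K₂`. -/
lemma mulK_add {q : ℕ} (X1 : Matrix (Fin q) (Fin m1) ℝ) (X2 : Matrix (Fin q) (Fin m2) ℝ)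
    (P Z : Matrix (Fin n) (Fin n) ℝ) (hP : IsUnit (g.RP P).det)
    (hPZ : IsUnit (g.RP (P + Z)).det) :
    X1 * g.K1 (P + Z) + X2 * g.K2 (P + Z)
      = X1 * g.K1 P + X2 * g.K2 P - fromCols X1 X2 * (g.RP (P + Z))⁻¹ * g.NP P Z := by
  have h1 : ∀ Q : Matrix (Fin n) (Fin n) ℝ,
      X1 * g.K1 Q + X2 * g.K2 Q = fromCols X1 X2 * g.KP Q := fun Q => by
    rw [KP_eq_fromRows, fromCols_mul_fromRows]
  rw [h1, h1, KP_add g P Z hP hPZ, Matrix.mul_sub, Matrix.mul_assoc]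

end GameData

/-- the recursively updated coefficient matrices `A_{(k)}`, `C_{l,(k)}`
coincide with the closed-loop matrices `A + B_1 K_1(P^(k)) + B_2 K_2(P^(k))` and
`C_l + D_{l,1} K_1(P^(k)) + D_{l,2} K_2(P^(k))`. -/
theorem statement14 {n m1 m2 r : ℕ} (g : GameData n m1 m2 r)
    (Pseq Zseq : ℕ → Matrix (Fin n) (Fin n) ℝ)
    (hPsymm : ∀ k, (Pseq k).IsSymm) (hZsymm : ∀ k, (Zseq k).IsSymm)
    (hP0 : Pseq 0 = 0) (hPrec : ∀ k, Pseq (k + 1) = Pseq k + Zseq k)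
    (hRinv : ∀ k, IsUnit (g.RP (Pseq k)).det)
    (Aseq : ℕ → Matrix (Fin n) (Fin n) ℝ)
    (Cseq : ℕ → Fin r → Matrix (Fin n) (Fin n) ℝ)
    (hA0 : Aseq 0 = g.A + g.B1 * g.K1 0 + g.B2 * g.K2 0)
    (hC0 : ∀ l, Cseq 0 l = g.C l + g.D1 l * g.K1 0 + g.D2 l * g.K2 0)
    (hArec : ∀ k, Aseq (k + 1) = Aseq k
      - fromCols g.B1 g.B2 * (g.RP (Pseq (k + 1)))⁻¹
        * fromRows (g.B1ᵀ * Zseq k + ∑ l, (g.D1 l)ᵀ * Zseq k * Cseq k l)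
                   (g.B2ᵀ * Zseq k + ∑ l, (g.D2 l)ᵀ * Zseq k * Cseq k l))
    (hCrec : ∀ k, ∀ l', Cseq (k + 1) l' = Cseq k l'
      - fromCols (g.D1 l') (g.D2 l') * (g.RP (Pseq (k + 1)))⁻¹
        * fromRows (g.B1ᵀ * Zseq k + ∑ l, (g.D1 l)ᵀ * Zseq k * Cseq k l)
                   (g.B2ᵀ * Zseq k + ∑ l, (g.D2 l)ᵀ * Zseq k * Cseq k l)) :
    ∀ k, Aseq k = g.A + g.B1 * g.K1 (Pseq k) + g.B2 * g.K2 (Pseq k) ∧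
      ∀ l, Cseq k l = g.C l + g.D1 l * g.K1 (Pseq k) + g.D2 l * g.K2 (Pseq k) := by
  intro k
  induction k with
  | zero => rw [hP0]; exact ⟨hA0, hC0⟩
  | succ k ih =>
    obtain ⟨ihA, ihC⟩ := ih
    have hCK : ∀ l, Cseq k l = g.CK (Pseq k) l := fun l => ihC l
    have hNP : fromRows (g.B1ᵀ * Zseq k + ∑ l, (g.D1 l)ᵀ * Zseq k * Cseq k l)
        (g.B2ᵀ * Zseq k + ∑ l, (g.D2 l)ᵀ * Zseq k * Cseq k l)
        = g.NP (Pseq k) (Zseq k) := by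
      unfold GameData.NP GameData.N1 GameData.N2
      congr 1 <;> simp only [hCK]
    have hPk1 := hPrec k
    have hU : IsUnit (g.RP (Pseq k + Zseq k)).det := hPk1 ▸ hRinv (k + 1)
    constructor
    · rw [hArec k, ihA, hNP, hPk1]
      conv_rhs => rw [add_assoc, g.mulK_add g.B1 g.B2 (Pseq k) (Zseq k) (hRinv k) hU]
      abel
    · intro l
      rw [hCrec k l, ihC l, hNP, hPk1]
      conv_rhs => rw [add_assoc,
        g.mulK_add (g.D1 l) (g.D2 l) (Pseq k) (Zseq k) (hRinv k) hU]
      abel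
end
end
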